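/- If the product X × Y of two nonempty metric spaces (with the sup metric) is straight, then both X and Y are straight. -/
import Mathlib


/-- A metric space is *straight* if for every finite cover by closed sets,
every real-valued function that is uniformly continuous on each member of the
cover is uniformly continuous on the whole space. -/
def Straight (X : Type) [MetricSpace X] : Prop :=
  ∀ (n : ℕ) (C : Fin n → Set X), (∀ i, IsClosed (C i)) → (⋃ i, C i) = Set.univ →
    ∀ f : X → ℝ, (∀ i, UniformContinuousOn f (C i)) → UniformContinuous f

/-- A metric space is *uniformly locally connected* if for every `ε > 0` there is `δ > 0`
such that any two points at distance `< δ` lie in a connected set of diameter `< ε`. -/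
def ULC (X : Type) [MetricSpace X] : Prop :=
  ∀ ε > (0 : ℝ), ∃ δ > (0 : ℝ), ∀ x y : X, dist x y < δ →
    ∃ S : Set X, IsConnected S ∧ x ∈ S ∧ y ∈ S ∧ Metric.diam S < ε


lemma straight_fst {X Y : Type} [MetricSpace X] [MetricSpace Y] [Nonempty Y]
    (h : Straight (X × Y)) : Straight X := by
  intro n C hCl hcov f hf
  have hF : UniformContinuous (fun p : X × Y => f p.1) := by
    apply h n (fun i => C i ×ˢ (Set.univ : Set Y))
    · intro i; exact (hCl i).prod isClosed_univ
    · ext p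
      simp only [Set.mem_iUnion, Set.mem_prod, Set.mem_univ, and_true, iff_true]
      have : p.1 ∈ ⋃ i, C i := hcov ▸ Set.mem_univ _
      simpa using this
    · intro i
      rw [Metric.uniformContinuousOn_iff]
      intro ε hε
      obtain ⟨δ, hδ, hd⟩ := Metric.uniformContinuousOn_iff.mp (hf i) ε hε
      refine ⟨δ, hδ, fun p hp q hq hpq => hd p.1 hp.1 q.1 hq.1 ?_⟩
      exact lt_of_le_of_lt (by rw [Prod.dist_eq]; exact le_max_left _ _) hpq
  have y0 : Y := Classical.arbitrary Y
  exact hF.comp (uniformContinuous_id.prodMk (uniformContinuous_const (b := y0)))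

lemma straight_snd {X Y : Type} [MetricSpace X] [MetricSpace Y] [Nonempty X]
    (h : Straight (X × Y)) : Straight Y := by
  intro n C hCl hcov f hf
  have hF : UniformContinuous (fun p : X × Y => f p.2) := by
    apply h n (fun i => (Set.univ : Set X) ×ˢ C i)
    · intro i; exact isClosed_univ.prod (hCl i)
    · ext p
      simp only [Set.mem_iUnion, Set.mem_prod, Set.mem_univ, true_and, iff_true]
      have : p.2 ∈ ⋃ i, C i := hcov ▸ Set.mem_univ _
      simpa using this
    · intro i
      rw [Metric.uniformContinuousOn_iff]
      intro ε hε
      obtain ⟨δ, hδ, hd⟩ := Metric.uniformContinuousOn_iff.mp (hf i) ε hε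
      refine ⟨δ, hδ, fun p hp q hq hpq => hd p.2 hp.2 q.2 hq.2 ?_⟩
      exact lt_of_le_of_lt (by rw [Prod.dist_eq]; exact le_max_right _ _) hpq
  have x0 : X := Classical.arbitrary X
  exact hF.comp ((uniformContinuous_const (b := x0)).prodMk uniformContinuous_id)

/-- If the product of two nonempty metric spaces (with the sup metric) is straight,
then both factors are straight. -/
theorem straight_of_straight_prod (X Y : Type) [MetricSpace X] [MetricSpace Y]
    [Nonempty X] [Nonempty Y] (h : Straight (X × Y)) : Straight X ∧ Straight Y := by
  exact ⟨straight_fst h, straight_snd h⟩
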